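/- Let H be an induced subgraph of a graph G. Then reg I(H) ≤ reg I(G), where I(H) and I(G) are the edge ideals considered over the polynomial rings on their respective vertex sets. -/

import Mathlib

open MvPolynomial

noncomputable section

namespace CMReg

variable {k : Type*} [Field k] {σ : Type*} [Fintype σ] [DecidableEq σ] [LinearOrder σ]

/-- The degree-`d` homogeneous component of an ideal `I` of `k[x_s : s ∈ σ]`, as a
`k`-vector space (`⊥` for negative `d`). -/
def degComp (I : Ideal (MvPolynomial σ k)) (d : ℤ) : Submodule k (MvPolynomial σ k) :=
  if 0 ≤ d then I.restrictScalars k ⊓ homogeneousSubmodule σ k d.toNat else ⊥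

lemma mulX_mem (I : Ideal (MvPolynomial σ k)) (a : σ) (d : ℤ) (m : MvPolynomial σ k)
    (hm : m ∈ degComp I d) : X a * m ∈ degComp I (d + 1) := by
  unfold degComp at *
  split_ifs at hm with h
  · rw [if_pos (by omega)]
    rw [Submodule.mem_inf] at hm
    obtain ⟨h1, h2⟩ := hm
    rw [Submodule.mem_inf]
    refine ⟨I.mul_mem_left _ h1, ?_⟩
    rw [mem_homogeneousSubmodule] at h2 ⊢
    have e : (d + 1).toNat = 1 + d.toNat := by omega
    rw [e]
    exact (isHomogeneous_X k a).mul h2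
  · simp only [Submodule.mem_bot] at hm
    subst hm
    rw [mul_zero]
    exact zero_mem _

/-- The internal-degree-`j` strand of the Koszul complex `K(x₁,...,xₙ) ⊗ I` in homological
degree `i`: a direct sum of copies of the degree-`(j - i)` component of `I`, indexed by the
`i`-element subsets of the variables (the basis of `Λⁱ`). -/
abbrev KD (I : Ideal (MvPolynomial σ k)) (i j : ℕ) : Type _ :=
  {S : Finset σ // S.card = i} → degComp I ((j : ℤ) - i)

/-- The Koszul differential `K_{i+1} → K_i` in internal degree `j`:
`(d f)(S) = ∑_{a ∉ S} (-1)^{|{b ∈ S : b < a}|} xₐ · f(S ∪ {a})`. -/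
def kdiff (I : Ideal (MvPolynomial σ k)) (i j : ℕ) : KD I (i + 1) j →ₗ[k] KD I i j where
  toFun f S := ∑ a ∈ S.1ᶜ.attach,
    ((-1 : k) ^ (S.1.filter (fun b => b < a.1)).card) •
      (⟨X a.1 * (f ⟨insert a.1 S.1, by
          rw [Finset.card_insert_of_notMem (Finset.mem_compl.mp a.2), S.2]⟩ : _).1, by
        have h := mulX_mem I a.1 _ _ (f ⟨insert a.1 S.1, by
          rw [Finset.card_insert_of_notMem (Finset.mem_compl.mp a.2), S.2]⟩).2
        rwa [show ((j : ℤ) - (i + 1 : ℕ)) + 1 = (j : ℤ) - i by push_cast; ring] at h⟩ :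
        degComp I ((j : ℤ) - i))
  map_add' f g := by
    funext S
    rw [Pi.add_apply, ← Finset.sum_add_distrib]
    refine Finset.sum_congr rfl (fun a _ => ?_)
    rw [← smul_add]
    congr 1
    apply Subtype.ext
    simp [mul_add]
  map_smul' c f := by
    funext S
    rw [RingHom.id_apply, Pi.smul_apply, Finset.smul_sum]
    refine Finset.sum_congr rfl (fun a _ => ?_)
    rw [smul_comm]
    congr 1
    apply Subtype.ext
    simp [mul_smul_comm]

/-- The cycles of the degree-`j` strand of the Koszul complex at homological degree `i`. -/
def cyclesAt (I : Ideal (MvPolynomial σ k)) (i j : ℕ) : Submodule k (KD I i j) :=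
  match i with
  | 0 => ⊤
  | (i' + 1) => LinearMap.ker (kdiff I i' j)

/-- The graded Betti number `β_{ij}(I) = dim_k Tor_i(k, I)_j`, computed as the dimension of
the homology of the degree-`j` strand of `K(x) ⊗ I` at homological degree `i`. -/
def bettiNum (I : Ideal (MvPolynomial σ k)) (i j : ℕ) : ℕ :=
  Module.finrank k (cyclesAt I i j) - Module.finrank k (LinearMap.range (kdiff I i j))

/-- The Castelnuovo–Mumford regularity `reg I = sup { j - i : β_{ij}(I) ≠ 0 }` of an ideal
of the polynomial ring, as an element of `ℕ∞`. -/
def reg (I : Ideal (MvPolynomial σ k)) : ℕ∞ :=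
  sSup {d : ℕ∞ | ∃ i j : ℕ, bettiNum I i j ≠ 0 ∧ ((j - i : ℕ) : ℕ∞) = d}

/-! ### Auxiliary material -/

lemma degComp_fd (I : Ideal (MvPolynomial σ k)) (d : ℤ) :
    FiniteDimensional k (degComp I d) := by
  have hle : degComp I d ≤ restrictTotalDegree σ k d.toNat := by
    unfold degComp
    split_ifs with h
    · intro p hp
      rw [mem_restrictTotalDegree]
      rcases eq_or_ne p 0 with rfl | hne
      · simp
      · exact le_of_eq (((Submodule.mem_inf.mp hp).2 :
          IsHomogeneous p d.toNat).totalDegree hne)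
    · exact bot_le
  exact Submodule.finiteDimensional_of_le hle

instance KD_fd (I : Ideal (MvPolynomial σ k)) (i j : ℕ) :
    FiniteDimensional k (KD I i j) := by
  haveI := degComp_fd I ((j : ℤ) - i)
  infer_instance

/-- Proof-irrelevant access to the components of an element of `KD I m j`. -/
def vals {I : Ideal (MvPolynomial σ k)} {m j : ℕ} (f : KD I m j) (T : Finset σ) :
    MvPolynomial σ k :=
  if h : T.card = m then ((f ⟨T, h⟩ : degComp I ((j : ℤ) - m)) : MvPolynomial σ k) else 0

lemma vals_mem {I : Ideal (MvPolynomial σ k)} {m j : ℕ} (f : KD I m j) (T : Finset σ) :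
    vals f T ∈ degComp I ((j : ℤ) - m) := by
  unfold vals
  split_ifs with h
  · exact (f ⟨T, h⟩).2
  · exact zero_mem _

lemma vals_add {I : Ideal (MvPolynomial σ k)} {m j : ℕ} (f g : KD I m j) (T : Finset σ) :
    vals (f + g) T = vals f T + vals g T := by
  unfold vals
  split_ifs with h <;> simp

lemma vals_smul {I : Ideal (MvPolynomial σ k)} {m j : ℕ} (c : k) (f : KD I m j) (T : Finset σ) :
    vals (c • f) T = c • vals f T := by
  unfold vals
  split_ifs with h <;> simp

lemma kdiff_val (I : Ideal (MvPolynomial σ k)) (i j : ℕ) (f : KD I (i + 1) j)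
    (S : {S : Finset σ // S.card = i}) :
    ((kdiff I i j f S : degComp I ((j : ℤ) - i)) : MvPolynomial σ k) =
      ∑ a ∈ S.1ᶜ, (-1 : k) ^ (S.1.filter (fun b => b < a)).card •
        (X a * vals f (insert a S.1)) := by
  rw [← Finset.sum_attach S.1ᶜ (fun a => (-1 : k) ^ (S.1.filter (fun b => b < a)).card •
    (X a * vals f (insert a S.1)))]
  show ((∑ a ∈ S.1ᶜ.attach, _ : degComp I ((j : ℤ) - i)) : MvPolynomial σ k) = _
  rw [AddSubmonoidClass.coe_finset_sum]
  refine Finset.sum_congr rfl (fun a _ => ?_)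
  rw [SetLike.val_smul]
  congr 1
  show X a.1 * _ = X a.1 * vals f (insert a.1 S.1)
  congr 1
  unfold vals
  rw [dif_pos]

lemma vals_kdiff (I : Ideal (MvPolynomial σ k)) (i j : ℕ) (f : KD I (i + 1) j)
    (T : Finset σ) (hT : T.card = i) :
    vals (kdiff I i j f) T =
      ∑ b ∈ Tᶜ, (-1 : k) ^ (T.filter (fun c => c < b)).card •
        (X b * vals f (insert b T)) := by
  unfold vals
  rw [dif_pos hT]
  exact kdiff_val I i j f ⟨T, hT⟩

lemma filter_lt_insert_card (S : Finset σ) (a b : σ) (ha : a ∉ S) :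
    (((insert a S).filter (fun c => c < b)).card) =
      (S.filter (fun c => c < b)).card + (if a < b then 1 else 0) := by
  rw [Finset.filter_insert]
  split_ifs with h
  · rw [Finset.card_insert_of_notMem (fun hc => ha (Finset.mem_filter.mp hc).1)]
  · omega

lemma kdiff_comp (I : Ideal (MvPolynomial σ k)) (i j : ℕ) (f : KD I (i + 1 + 1) j) :
    kdiff I i j (kdiff I (i + 1) j f) = 0 := by
  funext S
  rw [Pi.zero_apply]
  apply Subtype.ext
  rw [ZeroMemClass.coe_zero, kdiff_val]
  have key : ∀ a ∈ S.1ᶜ, (-1 : k) ^ (S.1.filter (fun b => b < a)).card •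
      (X a * vals (kdiff I (i + 1) j f) (insert a S.1)) =
      ∑ b ∈ S.1ᶜ.erase a, ((-1 : k) ^ ((S.1.filter (fun c => c < a)).card +
        ((insert a S.1).filter (fun c => c < b)).card)) •
        (X a * (X b * vals f (insert b (insert a S.1)))) := by
    intro a haS
    have ha : a ∉ S.1 := Finset.mem_compl.mp haS
    rw [vals_kdiff I (i + 1) j f _ (by rw [Finset.card_insert_of_notMem ha, S.2]),
      Finset.mul_sum, Finset.smul_sum]
    rw [show (insert a S.1)ᶜ = S.1ᶜ.erase a by
      ext x; simp [Finset.mem_erase, and_comm]]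
    refine Finset.sum_congr rfl (fun b _ => ?_)
    rw [mul_smul_comm, smul_smul, pow_add]
  rw [Finset.sum_congr rfl key]
  rw [Finset.sum_sigma']
  have hmem : ∀ p ∈ (S.1ᶜ.sigma fun a => S.1ᶜ.erase a),
      (⟨p.2, p.1⟩ : (_ : σ) × σ) ∈ S.1ᶜ.sigma fun a => S.1ᶜ.erase a := by
    rintro ⟨a, b⟩ hp
    simp only [Finset.mem_sigma, Finset.mem_erase] at hp ⊢
    exact ⟨hp.2.2, fun h => hp.2.1 h.symm, hp.1⟩
  refine Finset.sum_involution (fun p _ => ⟨p.2, p.1⟩) ?_ ?_ hmem (fun p hp => rfl)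
  · rintro ⟨a, b⟩ hp
    simp only [Finset.mem_sigma, Finset.mem_erase] at hp
    obtain ⟨haS, hba, hbS⟩ := hp
    have ha : a ∉ S.1 := Finset.mem_compl.mp haS
    have hb : b ∉ S.1 := Finset.mem_compl.mp hbS
    have hins : insert b (insert a S.1) = insert a (insert b S.1) := Finset.insert_comm _ _ _
    have hsign : ((-1 : k) ^ ((S.1.filter (fun c => c < a)).card +
        ((insert a S.1).filter (fun c => c < b)).card)) =
        -((-1 : k) ^ ((S.1.filter (fun c => c < b)).card +
        ((insert b S.1).filter (fun c => c < a)).card)) := by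
      rw [filter_lt_insert_card S.1 a b ha, filter_lt_insert_card S.1 b a hb]
      rcases lt_or_gt_of_ne hba with h | h
      · rw [if_neg (asymm h), if_pos h]
        ring
      · rw [if_pos h, if_neg (asymm h)]
        ring
    show _ + _ = 0
    rw [hsign, hins, neg_smul,
      show X a * (X b * vals f (insert a (insert b S.1))) =
        X b * (X a * vals f (insert a (insert b S.1))) by ring]
    exact neg_add_cancel _
  · rintro ⟨a, b⟩ hp _
    simp only [Finset.mem_sigma, Finset.mem_erase] at hp
    intro hcontra
    exact hp.2.1 (congrArg Sigma.fst hcontra)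

end CMReg

/-- `M` is an induced matching of `G`: a set of pairwise vertex-disjoint edges of `G` such
that the only edges of `G` between vertices covered by `M` are the edges of `M` themselves. -/
def SimpleGraph.IsInducedMatching {V : Type*} (G : SimpleGraph V) (M : Finset (Sym2 V)) : Prop :=
  (↑M : Set (Sym2 V)) ⊆ G.edgeSet ∧
  (∀ e ∈ M, ∀ f ∈ M, e ≠ f → ∀ u : V, u ∈ e → u ∉ f) ∧
  (∀ u v : V, (∃ e ∈ M, u ∈ e) → (∃ f ∈ M, v ∈ f) → G.Adj u v → s(u, v) ∈ M)

/-- The induced matching number of `G`: the largest size of an induced matching. -/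
noncomputable def SimpleGraph.inducedMatchingNumber {V : Type*} (G : SimpleGraph V) : ℕ :=
  sSup {n : ℕ | ∃ M : Finset (Sym2 V), G.IsInducedMatching M ∧ M.card = n}

/-- The edge ideal of a graph `G`: the ideal of `k[x_v : v ∈ V]` generated by the products
`x_u x_v` over the edges `{u, v}` of `G`. -/
def edgeIdeal (k : Type*) [Field k] {V : Type*} (G : SimpleGraph V) :
    Ideal (MvPolynomial V k) :=
  Ideal.span {p | ∃ u v : V, G.Adj u v ∧ p = MvPolynomial.X u * MvPolynomial.X v}

namespace CMRegAux

open CMReg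

variable (k : Type*) [Field k] {V : Type*} [Fintype V] [DecidableEq V] [LinearOrder V]
variable (G : SimpleGraph V) (s : Finset V)

/-- Renaming, from the polynomial ring on `s` to the one on `V`. -/
def RR : MvPolynomial (↑s : Set V) k →ₐ[k] MvPolynomial V k :=
  rename Subtype.val

/-- Projection killing the variables outside `s`. -/
def PP : MvPolynomial V k →ₐ[k] MvPolynomial (↑s : Set V) k :=
  aeval (fun v => if h : v ∈ (↑s : Set V) then X ⟨v, h⟩ else 0)

lemma PP_RR (q : MvPolynomial (↑s : Set V) k) : PP k s (RR k s q) = q := by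
  have h : (PP k s).comp (RR k s) = AlgHom.id k _ := by
    apply MvPolynomial.algHom_ext
    intro a
    simp only [AlgHom.comp_apply, AlgHom.id_apply, RR, rename_X, PP, aeval_X, dif_pos a.2,
      Subtype.coe_eta]
  exact AlgHom.congr_fun h q

lemma PP_X_of_mem {v : V} (hv : v ∈ (↑s : Set V)) : PP k s (X v) = X ⟨v, hv⟩ := by
  rw [PP, aeval_X, dif_pos hv]

lemma PP_X_of_not_mem {v : V} (hv : v ∉ (↑s : Set V)) : PP k s (X v) = 0 := by
  rw [PP, aeval_X, dif_neg hv]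

lemma RR_isHomogeneous {q : MvPolynomial (↑s : Set V) k} {n : ℕ} (hq : q.IsHomogeneous n) :
    (RR k s q).IsHomogeneous n :=
  hq.rename_isHomogeneous

lemma PP_isHomogeneous {q : MvPolynomial V k} {n : ℕ} (hq : q.IsHomogeneous n) :
    (PP k s q).IsHomogeneous n := by
  have hg : ∀ v : V, (if h : v ∈ (↑s : Set V) then X (R := k) (⟨v, h⟩ : (↑s : Set V))
      else 0).IsHomogeneous 1 := by
    intro v
    split_ifs with hv
    · exact isHomogeneous_X _ _
    · exact isHomogeneous_zero _ _ _
  have h := hq.aeval _ hg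
  rw [one_mul] at h
  exact h

lemma RR_mem_ideal {q : MvPolynomial (↑s : Set V) k}
    (hq : q ∈ edgeIdeal k (G.induce (↑s : Set V))) : RR k s q ∈ edgeIdeal k G := by
  have hle : Ideal.map (RR k s) (edgeIdeal k (G.induce (↑s : Set V))) ≤ edgeIdeal k G := by
    rw [edgeIdeal, Ideal.map_span]
    apply Ideal.span_le.mpr
    rintro _ ⟨p, ⟨u, v, huv, rfl⟩, rfl⟩
    refine Ideal.subset_span ⟨u.1, v.1, huv, ?_⟩
    simp [RR]
  exact hle (Ideal.mem_map_of_mem _ hq)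

lemma PP_mem_ideal {q : MvPolynomial V k} (hq : q ∈ edgeIdeal k G) :
    PP k s q ∈ edgeIdeal k (G.induce (↑s : Set V)) := by
  have hle : Ideal.map (PP k s) (edgeIdeal k G) ≤ edgeIdeal k (G.induce (↑s : Set V)) := by
    rw [edgeIdeal, Ideal.map_span]
    apply Ideal.span_le.mpr
    rintro _ ⟨p, ⟨u, v, huv, rfl⟩, rfl⟩
    show PP k s (X u * X v) ∈ _
    rw [map_mul]
    by_cases hu : u ∈ (↑s : Set V)
    · by_cases hv : v ∈ (↑s : Set V)
      · rw [PP_X_of_mem k s hu, PP_X_of_mem k s hv]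
        exact Ideal.subset_span ⟨⟨u, hu⟩, ⟨v, hv⟩, huv, rfl⟩
      · rw [PP_X_of_not_mem k s hv, mul_zero]
        exact zero_mem _
    · rw [PP_X_of_not_mem k s hu, zero_mul]
      exact zero_mem _
  exact hle (Ideal.mem_map_of_mem _ hq)

lemma RR_mem_degComp {d : ℤ} {q : MvPolynomial (↑s : Set V) k}
    (hq : q ∈ degComp (edgeIdeal k (G.induce (↑s : Set V))) d) :
    RR k s q ∈ degComp (edgeIdeal k G) d := by
  unfold degComp at hq ⊢
  split_ifs at hq ⊢ with h
  · rw [Submodule.mem_inf] at hq ⊢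
    exact ⟨RR_mem_ideal k G s hq.1, RR_isHomogeneous k s hq.2⟩
  · rw [Submodule.mem_bot] at hq ⊢
    rw [hq, map_zero]

lemma PP_mem_degComp {d : ℤ} {q : MvPolynomial V k}
    (hq : q ∈ degComp (edgeIdeal k G) d) :
    PP k s q ∈ degComp (edgeIdeal k (G.induce (↑s : Set V))) d := by
  unfold degComp at hq ⊢
  split_ifs at hq ⊢ with h
  · rw [Submodule.mem_inf] at hq ⊢
    exact ⟨PP_mem_ideal k G s hq.1, PP_isHomogeneous k s hq.2⟩
  · rw [Submodule.mem_bot] at hq ⊢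
    rw [hq, map_zero]

variable {k}

/-- Pushing a finset of vertices of the subgraph up to `V`. -/
def pushF (T : Finset (↑s : Set V)) : Finset V :=
  T.map (Function.Embedding.subtype _)

/-- Pulling a finset of vertices of `V` down to the subgraph. -/
def pullF (T : Finset V) : Finset (↑s : Set V) :=
  T.subtype (· ∈ (↑s : Set V))

lemma card_pushF (T : Finset (↑s : Set V)) : (pushF s T).card = T.card :=
  Finset.card_map _

lemma pushF_insert (a : (↑s : Set V)) (T : Finset (↑s : Set V)) :
    pushF s (insert a T) = insert ↑a (pushF s T) :=
  Finset.map_insert _ _ _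

lemma coe_mem_pushF {a : (↑s : Set V)} {T : Finset (↑s : Set V)} :
    (↑a : V) ∈ pushF s T ↔ a ∈ T :=
  Finset.mem_map' _

lemma mem_of_mem_pushF {x : V} {T : Finset (↑s : Set V)} (hx : x ∈ pushF s T) :
    x ∈ (↑s : Set V) := by
  obtain ⟨a, _, rfl⟩ := Finset.mem_map.mp hx
  exact a.2

lemma pullF_pushF (T : Finset (↑s : Set V)) : pullF s (pushF s T) = T := by
  ext a
  rw [pullF, Finset.mem_subtype, coe_mem_pushF]

lemma pushF_pullF {T : Finset V} (hT : ∀ x ∈ T, x ∈ (↑s : Set V)) :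
    pushF s (pullF s T) = T := by
  rw [pushF, pullF, Finset.subtype_map, Finset.filter_true_of_mem hT]

lemma card_pullF (T : Finset V) :
    (pullF s T).card = (T.filter (· ∈ (↑s : Set V))).card :=
  Finset.card_subtype _ _

lemma card_pullF_of_subset {T : Finset V} (hT : ∀ x ∈ T, x ∈ (↑s : Set V)) :
    (pullF s T).card = T.card := by
  rw [card_pullF, Finset.filter_true_of_mem hT]

lemma card_pullF_lt {T : Finset V} {x : V} (hx : x ∈ T) (hxs : x ∉ (↑s : Set V)) :
    (pullF s T).card < T.card := by
  rw [card_pullF]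
  apply Finset.card_lt_card
  refine ⟨Finset.filter_subset _ _, fun hsub => hxs ?_⟩
  exact (Finset.mem_filter.mp (hsub hx)).2

lemma pullF_insert {a : V} (ha : a ∈ (↑s : Set V)) (T : Finset V) :
    pullF s (insert a T) = insert ⟨a, ha⟩ (pullF s T) := by
  ext b
  simp only [pullF, Finset.mem_subtype, Finset.mem_insert, Subtype.ext_iff]

lemma filter_lt_pushF (T : Finset (↑s : Set V)) (b : (↑s : Set V)) :
    ((pushF s T).filter (fun c => c < (↑b : V))).card =
      (T.filter (fun c => c < b)).card := by
  have h : (pushF s T).filter (fun c => c < (↑b : V)) =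
      pushF s (T.filter (fun c => c < b)) := by
    ext x
    constructor
    · intro hx
      obtain ⟨hx1, hx2⟩ := Finset.mem_filter.mp hx
      obtain ⟨a, ha, rfl⟩ := Finset.mem_map.mp hx1
      refine Finset.mem_map.mpr ⟨a, Finset.mem_filter.mpr ⟨ha, ?_⟩, rfl⟩
      exact Subtype.coe_lt_coe.mp hx2
    · intro hx
      obtain ⟨a, ha, rfl⟩ := Finset.mem_map.mp hx
      obtain ⟨ha1, ha2⟩ := Finset.mem_filter.mp ha
      exact Finset.mem_filter.mpr ⟨Finset.mem_map.mpr ⟨a, ha1, rfl⟩,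
        Subtype.coe_lt_coe.mpr ha2⟩
  rw [h, card_pushF]

lemma compl_pushF_subset (T : Finset (↑s : Set V)) :
    pushF s Tᶜ ⊆ (pushF s T)ᶜ := by
  intro x hx
  obtain ⟨a, ha, rfl⟩ := Finset.mem_map.mp hx
  rw [Finset.mem_compl] at ha
  rw [Finset.mem_compl]
  intro hmem
  exact ha ((coe_mem_pushF s).mp hmem)

variable (k)

/-- The restriction chain map. -/
def ψL (i j : ℕ) : KD (edgeIdeal k G) i j →ₗ[k]
    KD (edgeIdeal k (G.induce (↑s : Set V))) i j where
  toFun g S' := ⟨PP k s (vals g (pushF s S'.1)),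
    PP_mem_degComp k G s (vals_mem g (pushF s S'.1))⟩
  map_add' g₁ g₂ := by
    funext S'
    apply Subtype.ext
    show PP k s (vals (g₁ + g₂) _) = _
    rw [vals_add, map_add]
    rfl
  map_smul' c g := by
    funext S'
    apply Subtype.ext
    show PP k s (vals (c • g) _) = _
    rw [vals_smul, map_smul]
    rfl

/-- The extension chain map. -/
def φL (i j : ℕ) : KD (edgeIdeal k (G.induce (↑s : Set V))) i j →ₗ[k]
    KD (edgeIdeal k G) i j where
  toFun f S := ⟨RR k s (vals f (pullF s S.1)),
    RR_mem_degComp k G s (vals_mem f (pullF s S.1))⟩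
  map_add' f₁ f₂ := by
    funext S
    apply Subtype.ext
    show RR k s (vals (f₁ + f₂) _) = _
    rw [vals_add, map_add]
    rfl
  map_smul' c f := by
    funext S
    apply Subtype.ext
    show RR k s (vals (c • f) _) = _
    rw [vals_smul, map_smul]
    rfl

lemma vals_ψL {i j : ℕ} (g : KD (edgeIdeal k G) i j) {T : Finset (↑s : Set V)}
    (hT : T.card = i) :
    vals (ψL k G s i j g) T = PP k s (vals g (pushF s T)) := by
  unfold vals
  rw [dif_pos hT]
  rfl

lemma vals_φL {i j : ℕ} (f : KD (edgeIdeal k (G.induce (↑s : Set V))) i j) {T : Finset V}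
    (hT : T.card = i) :
    vals (φL k G s i j f) T = RR k s (vals f (pullF s T)) := by
  unfold vals
  rw [dif_pos hT]
  rfl

lemma ψφ_id (i j : ℕ) (f : KD (edgeIdeal k (G.induce (↑s : Set V))) i j) :
    ψL k G s i j (φL k G s i j f) = f := by
  funext S'
  apply Subtype.ext
  show PP k s (vals (φL k G s i j f) (pushF s S'.1)) = _
  rw [vals_φL k G s f (by rw [card_pushF, S'.2]), PP_RR, pullF_pushF]
  unfold vals
  rw [dif_pos S'.2]

lemma chain_ψ (i j : ℕ) (g : KD (edgeIdeal k G) (i + 1) j) :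
    kdiff (edgeIdeal k (G.induce (↑s : Set V))) i j (ψL k G s (i + 1) j g) =
      ψL k G s i j (kdiff (edgeIdeal k G) i j g) := by
  funext S'
  apply Subtype.ext
  rw [kdiff_val]
  show _ = PP k s (vals (kdiff (edgeIdeal k G) i j g) (pushF s S'.1))
  rw [vals_kdiff (edgeIdeal k G) i j g _ (by rw [card_pushF, S'.2]), map_sum]
  have hsplit : ∀ b ∈ (pushF s S'.1)ᶜ,
      PP k s ((-1 : k) ^ ((pushF s S'.1).filter (fun c => c < b)).card •
        (X b * vals g (insert b (pushF s S'.1)))) =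
      (-1 : k) ^ ((pushF s S'.1).filter (fun c => c < b)).card •
        (PP k s (X b) * PP k s (vals g (insert b (pushF s S'.1)))) := by
    intro b _
    rw [map_smul, map_mul]
  rw [Finset.sum_congr rfl hsplit]
  have hvan : ∀ x ∈ (pushF s S'.1)ᶜ, x ∉ pushF s S'.1ᶜ →
      (-1 : k) ^ ((pushF s S'.1).filter (fun c => c < x)).card •
        (PP k s (X x) * PP k s (vals g (insert x (pushF s S'.1)))) = 0 := by
    intro x hx hx'
    have hxs : x ∉ (↑s : Set V) := by
      intro hmem
      apply hx'
      have : (⟨x, hmem⟩ : (↑s : Set V)) ∈ S'.1ᶜ := by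
        rw [Finset.mem_compl]
        intro hc
        exact Finset.mem_compl.mp hx ((coe_mem_pushF s).mpr hc)
      exact (coe_mem_pushF s).mpr this
    rw [PP_X_of_not_mem k s hxs, zero_mul, smul_zero]
  rw [← Finset.sum_subset (compl_pushF_subset s S'.1) hvan]
  rw [show pushF s S'.1ᶜ = S'.1ᶜ.map (Function.Embedding.subtype _) from rfl,
    Finset.sum_map]
  simp only [Function.Embedding.coe_subtype]
  refine Finset.sum_congr rfl (fun a ha => ?_)
  have haS : (a : (↑s : Set V)) ∉ S'.1 := Finset.mem_compl.mp ha
  erw [filter_lt_pushF]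
  rw [PP_X_of_mem k s a.2, Subtype.coe_eta, ← pushF_insert,
    vals_ψL k G s g (by rw [Finset.card_insert_of_notMem haS, S'.2])]

lemma chain_φ (i j : ℕ) (f : KD (edgeIdeal k (G.induce (↑s : Set V))) (i + 1) j) :
    kdiff (edgeIdeal k G) i j (φL k G s (i + 1) j f) =
      φL k G s i j (kdiff (edgeIdeal k (G.induce (↑s : Set V))) i j f) := by
  funext S
  apply Subtype.ext
  rw [kdiff_val]
  show _ = RR k s (vals (kdiff (edgeIdeal k (G.induce (↑s : Set V))) i j f) (pullF s S.1))
  by_cases hsub : ∀ x ∈ S.1, x ∈ (↑s : Set V)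
  · -- the subset is contained in s
    rw [vals_kdiff _ i j f (pullF s S.1) (by rw [card_pullF_of_subset (s := s) hsub, S.2]), map_sum]
    have hsplit : ∀ b ∈ (pullF s S.1)ᶜ,
        RR k s ((-1 : k) ^ ((pullF s S.1).filter (fun c => c < b)).card •
          (X b * vals f (insert b (pullF s S.1)))) =
        (-1 : k) ^ ((pullF s S.1).filter (fun c => c < b)).card •
          (X (↑b : V) * RR k s (vals f (insert b (pullF s S.1)))) := by
      intro b _
      rw [map_smul, map_mul]
      congr 2
      simp [RR]
    rw [Finset.sum_congr rfl hsplit]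
    have hcompl : pushF s (pullF s S.1)ᶜ ⊆ S.1ᶜ := by
      have := compl_pushF_subset s (pullF s S.1)
      rwa [pushF_pullF (s := s) hsub] at this
    have hvan : ∀ x ∈ S.1ᶜ, x ∉ pushF s (pullF s S.1)ᶜ →
        (-1 : k) ^ (S.1.filter (fun c => c < x)).card •
          (X x * vals (φL k G s (i + 1) j f) (insert x S.1)) = 0 := by
      intro x hx hx'
      have hxs : x ∉ (↑s : Set V) := by
        intro hmem
        apply hx'
        have : (⟨x, hmem⟩ : (↑s : Set V)) ∈ (pullF s S.1)ᶜ := by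
          rw [Finset.mem_compl, pullF, Finset.mem_subtype]
          exact Finset.mem_compl.mp hx
        exact (coe_mem_pushF s).mpr this
      have hxS : x ∉ S.1 := Finset.mem_compl.mp hx
      rw [vals_φL k G s f (by rw [Finset.card_insert_of_notMem hxS, S.2])]
      have h0 : vals f (pullF s (insert x S.1)) = 0 := by
        unfold vals
        rw [dif_neg]
        have := card_pullF_lt (s := s) (Finset.mem_insert_self x S.1) hxs
        rw [Finset.card_insert_of_notMem hxS, S.2] at this
        omega
      rw [h0, map_zero, mul_zero, smul_zero]
    rw [← Finset.sum_subset hcompl hvan]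
    rw [show pushF s (pullF s S.1)ᶜ = (pullF s S.1)ᶜ.map (Function.Embedding.subtype _)
      from rfl, Finset.sum_map]
    simp only [Function.Embedding.coe_subtype]
    refine Finset.sum_congr rfl (fun a ha => ?_)
    have haP : a ∉ pullF s S.1 := Finset.mem_compl.mp ha
    have haS : (↑a : V) ∉ S.1 := by
      intro hc
      exact haP (Finset.mem_subtype.mpr hc)
    have hsgn : (S.1.filter (fun c => c < (↑a : V))).card =
        ((pullF s S.1).filter (fun c => c < a)).card := by
      conv_lhs => rw [← pushF_pullF (s := s) hsub]
      rw [filter_lt_pushF]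
    erw [hsgn]
    rw [vals_φL k G s f (by rw [Finset.card_insert_of_notMem haS, S.2]),
      pullF_insert (s := s) a.2, Subtype.coe_eta]
  · -- some vertex of S is outside s
    push_neg at hsub
    obtain ⟨x, hxS, hxs⟩ := hsub
    have hRHS : vals (kdiff (edgeIdeal k (G.induce (↑s : Set V))) i j f) (pullF s S.1) = 0 := by
      unfold vals
      rw [dif_neg]
      have := card_pullF_lt (s := s) hxS hxs
      rw [S.2] at this
      omega
    rw [hRHS, map_zero]
    apply Finset.sum_eq_zero
    intro a ha
    have haS : a ∉ S.1 := Finset.mem_compl.mp ha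
    rw [vals_φL k G s f (by rw [Finset.card_insert_of_notMem haS, S.2])]
    have h0 : vals f (pullF s (insert a S.1)) = 0 := by
      unfold vals
      rw [dif_neg]
      have := card_pullF_lt (s := s) (T := insert a S.1) (Finset.mem_insert_of_mem hxS) hxs
      rw [Finset.card_insert_of_notMem haS, S.2] at this
      omega
    rw [h0, map_zero, mul_zero, smul_zero]

lemma betti_ne (i j : ℕ)
    (h : bettiNum (edgeIdeal k (G.induce (↑s : Set V))) i j ≠ 0) :
    bettiNum (edgeIdeal k G) i j ≠ 0 := by
  intro hG
  unfold bettiNum at h hG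
  have hG' : Module.finrank k (cyclesAt (edgeIdeal k G) i j) ≤
      Module.finrank k (LinearMap.range (kdiff (edgeIdeal k G) i j)) := by omega
  have hBZ : LinearMap.range (kdiff (edgeIdeal k G) i j) ≤ cyclesAt (edgeIdeal k G) i j := by
    cases i with
    | zero => exact le_top
    | succ i' =>
      rintro _ ⟨g, rfl⟩
      show _ ∈ LinearMap.ker (kdiff (edgeIdeal k G) i' j)
      rw [LinearMap.mem_ker]
      exact kdiff_comp (edgeIdeal k G) i' j g
  have heq : LinearMap.range (kdiff (edgeIdeal k G) i j) = cyclesAt (edgeIdeal k G) i j :=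
    Submodule.eq_of_le_of_finrank_le hBZ hG'
  have hZB : cyclesAt (edgeIdeal k (G.induce (↑s : Set V))) i j ≤
      LinearMap.range (kdiff (edgeIdeal k (G.induce (↑s : Set V))) i j) := by
    intro z hz
    have hφz : φL k G s i j z ∈ cyclesAt (edgeIdeal k G) i j := by
      cases i with
      | zero => exact Submodule.mem_top
      | succ i' =>
        show _ ∈ LinearMap.ker (kdiff (edgeIdeal k G) i' j)
        rw [LinearMap.mem_ker, chain_φ k G s i' j z]
        have hz' : kdiff (edgeIdeal k (G.induce (↑s : Set V))) i' j z = 0 :=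
          LinearMap.mem_ker.mp hz
        rw [hz', map_zero]
    rw [← heq] at hφz
    obtain ⟨g, hg⟩ := hφz
    refine ⟨ψL k G s (i + 1) j g, ?_⟩
    rw [chain_ψ k G s i j g, hg, ψφ_id]
  have hle : Module.finrank k (cyclesAt (edgeIdeal k (G.induce (↑s : Set V))) i j) ≤
      Module.finrank k (LinearMap.range (kdiff (edgeIdeal k (G.induce (↑s : Set V))) i j)) :=
    Submodule.finrank_mono hZB
  omega

end CMRegAux

/-- For an induced subgraph `H = G[s]` of `G`, `reg I(H) ≤ reg I(G)`,
the two edge ideals being taken in the polynomial rings on the respective vertex sets. -/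
theorem reg_edgeIdeal_induce_le {k : Type*} [Field k] {V : Type*}
    [Fintype V] [DecidableEq V] [LinearOrder V] (G : SimpleGraph V) (s : Finset V) :
    CMReg.reg (edgeIdeal k (G.induce (↑s : Set V))) ≤ CMReg.reg (edgeIdeal k G) := by
  unfold CMReg.reg
  apply sSup_le_sSup
  rintro d ⟨i, j, hb, rfl⟩
  exact ⟨i, j, CMRegAux.betti_ne k G s i j hb, rfl⟩
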